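/- Define W(λ) = ∏_{p≥1} (1 − λ/((p+2ν)(p+2ν+1))) for λ ≥ 0 and fixed real ν ≥ 0. Then the infinite product converges absolutely for every λ ≥ 0, and W(k(k+1)) = Γ(2ν+1)Γ(2ν+2)/(Γ(2ν−k+1)Γ(2ν+k+2)) for every integer k with 0 ≤ k ≤ 2ν (2ν a nonnegative integer). -/

import Mathlib

open Filter Finset Topology

private lemma asc_fact (a k : ℕ) :
    (a + k).factorial = a.factorial * ∏ j ∈ range k, (a + 1 + j) := by
  induction k with
  | zero => simp
  | succ k ih =>
    rw [show a + (k+1) = (a+k)+1 from rfl, Nat.factorial_succ, ih, prod_range_succ]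
    ring

private lemma term_pos (N : ℕ) (lam : ℝ) (hlam : 0 ≤ lam) {p : ℕ}
    (hp : 2 * lam ≤ p) : (1:ℝ)/2 ≤ 1 - lam / (((p : ℝ) + 1 + N) * ((p : ℝ) + 1 + N + 1)) := by
  have h1 : (0:ℝ) < (p : ℝ) + 1 + N := by positivity
  have hb : lam / (((p : ℝ) + 1 + N) * ((p : ℝ) + 1 + N + 1)) ≤ 1/2 := by
    rw [div_le_iff₀ (by positivity)]
    nlinarith [Nat.cast_nonneg (α := ℝ) N, Nat.cast_nonneg (α := ℝ) p]
  linarith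

private lemma summable_aux (N : ℕ) (lam : ℝ) (hlam : 0 ≤ lam) :
    Summable (fun p : ℕ =>
      Real.log (1 - lam / (((p : ℝ) + 1 + N) * ((p : ℝ) + 1 + N + 1)))) := by
  set f : ℕ → ℝ := fun p => 1 - lam / (((p : ℝ) + 1 + N) * ((p : ℝ) + 1 + N + 1)) with hf
  set M : ℕ := ⌈2 * lam⌉₊ with hM
  rw [← summable_nat_add_iff M]
  have hbig : ∀ n : ℕ, 2 * lam ≤ ((n + M : ℕ) : ℝ) := by
    intro n
    calc 2 * lam ≤ (M : ℝ) := Nat.le_ceil _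
    _ ≤ ((n + M : ℕ) : ℝ) := by push_cast; linarith [Nat.cast_nonneg (α := ℝ) n]
  have key : ∀ n : ℕ, |Real.log (f (n + M))| ≤ 2 * lam * (1 / ((n:ℝ)+1)^2) := by
    intro n
    have hp1 : (0:ℝ) < ((n + M : ℕ) : ℝ) + 1 + N := by positivity
    have hp2 : (0:ℝ) < ((n + M : ℕ) : ℝ) + 1 + N + 1 := by positivity
    set t : ℝ := lam / ((((n + M : ℕ) : ℝ) + 1 + N) * (((n + M : ℕ) : ℝ) + 1 + N + 1)) with ht
    have hfval : f (n + M) = 1 - t := rfl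
    have ht0 : 0 ≤ t := by positivity
    have ht2 : t ≤ 1/2 := by
      have := term_pos N lam hlam (hbig n)
      rw [← ht] at this
      linarith
    have hpos : (0:ℝ) < 1 - t := by linarith
    have hub : Real.log (1 - t) ≤ 0 := Real.log_nonpos (by linarith) (by linarith)
    have hlb : -(2*t) ≤ Real.log (1 - t) := by
      have h := Real.log_le_sub_one_of_pos (x := (1-t)⁻¹) (by positivity)
      rw [Real.log_inv] at h
      have h2 : (1-t)⁻¹ - 1 ≤ 2 * t := by
        rw [sub_le_iff_le_add, inv_le_iff_one_le_mul₀ hpos]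
        nlinarith
      linarith
    have habs : |Real.log (f (n+M))| ≤ 2 * t := by
      rw [hfval, abs_le]; constructor <;> linarith
    refine habs.trans ?_
    have hle : ((n:ℝ)+1)^2 ≤ ((((n + M : ℕ)) : ℝ) + 1 + N) * (((n + M : ℕ) : ℝ) + 1 + N + 1) := by
      have h : ((n:ℝ)) ≤ ((n + M : ℕ) : ℝ) := by push_cast; linarith [Nat.cast_nonneg (α := ℝ) M]
      nlinarith [Nat.cast_nonneg (α := ℝ) N, Nat.cast_nonneg (α := ℝ) n]
    have ht3 : t ≤ lam * (1 / ((n:ℝ)+1)^2) := by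
      rw [ht, mul_one_div]
      gcongr
    linarith
  have hsum : Summable (fun n : ℕ => 2 * lam * (1 / ((n:ℝ)+1)^2)) := by
    apply Summable.mul_left
    have h := (Real.summable_one_div_nat_pow (p := 2)).mpr (by norm_num)
    have h2 := (summable_nat_add_iff (f := fun n : ℕ => 1 / ((n:ℝ))^2) 1).mpr h
    exact h2.congr (by intro n; push_cast; ring)
  exact Summable.of_abs (hsum.of_nonneg_of_le (fun n => abs_nonneg _) key)

private lemma mult_aux (N : ℕ) (lam : ℝ) (hlam : 0 ≤ lam) :
    Multipliable (fun p : ℕ =>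
      1 - lam / (((p : ℝ) + 1 + N) * ((p : ℝ) + 1 + N + 1))) := by
  set f : ℕ → ℝ := fun p => 1 - lam / (((p : ℝ) + 1 + N) * ((p : ℝ) + 1 + N + 1)) with hf
  set M : ℕ := ⌈2 * lam⌉₊ with hM
  set s : Set ℕ := ↑(range M) with hs
  have hfin : s.Finite := (range M).finite_toSet
  refine Multipliable.compl_add ?_ (hfin.multipliable f)
  have hpos : ∀ x : ↥(sᶜ), 0 < f x := by
    rintro ⟨p, hp⟩
    have hpM : M ≤ p := by
      simpa [hs, Finset.mem_coe, Finset.mem_range, not_lt] using hp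
    have h2 : 2 * lam ≤ (p : ℝ) := by
      calc 2 * lam ≤ (M : ℝ) := Nat.le_ceil _
      _ ≤ (p : ℝ) := by exact_mod_cast hpM
    have := term_pos N lam hlam h2
    simp only [hf]
    linarith
  have hsum : Summable fun x : ↥(sᶜ) => Real.log (f x) :=
    (summable_aux N lam hlam).subtype _
  exact Real.multipliable_of_summable_log hpos hsum

private lemma partial_prod (N k : ℕ) (hk : k ≤ N) (n : ℕ) :
    ∏ p ∈ range n, (1 - ((k:ℝ) * ((k:ℝ) + 1)) / (((p : ℝ) + 1 + N) * ((p : ℝ) + 1 + N + 1)))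
      = ((N.factorial : ℝ) * (N+1).factorial * (N-k+n).factorial * (N+k+1+n).factorial) /
        ((N-k).factorial * ((N+k+1).factorial * ((N+n).factorial * (N+1+n).factorial))) := by
  induction n with
  | zero =>
    simp only [range_zero, prod_empty, Nat.add_zero]
    rw [eq_comm, div_eq_one_iff_eq (by positivity)]
    ring
  | succ n ih =>
    rw [prod_range_succ, ih]
    rw [show (N-k+(n+1)).factorial = (N-k+n+1) * (N-k+n).factorial from Nat.factorial_succ _,
        show (N+k+1+(n+1)).factorial = (N+k+1+n+1) * (N+k+1+n).factorial from Nat.factorial_succ _,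
        show (N+(n+1)).factorial = (N+n+1) * (N+n).factorial from Nat.factorial_succ _,
        show (N+1+(n+1)).factorial = (N+1+n+1) * (N+1+n).factorial from Nat.factorial_succ _]
    have hNk : ((N - k : ℕ) : ℝ) = (N : ℝ) - k := by
      push_cast [Nat.cast_sub hk]; ring
    have e1 : (0:ℝ) < (n : ℝ) + 1 + N := by positivity
    have e2 : (0:ℝ) < (n : ℝ) + 1 + N + 1 := by positivity
    have f1 : (0:ℝ) < ((N-k).factorial : ℝ) := by exact_mod_cast (N-k).factorial_pos
    have f2 : (0:ℝ) < ((N+k+1).factorial : ℝ) := by exact_mod_cast (N+k+1).factorial_pos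
    have f3 : (0:ℝ) < ((N+n).factorial : ℝ) := by exact_mod_cast (N+n).factorial_pos
    have f4 : (0:ℝ) < ((N+1+n).factorial : ℝ) := by exact_mod_cast (N+1+n).factorial_pos
    have g3 : (0:ℝ) < (((N+n+1) * (N+n).factorial : ℕ) : ℝ) := by
      exact_mod_cast Nat.mul_pos (Nat.succ_pos _) (N+n).factorial_pos
    have g4 : (0:ℝ) < (((N+1+n+1) * (N+1+n).factorial : ℕ) : ℝ) := by
      exact_mod_cast Nat.mul_pos (Nat.succ_pos _) (N+1+n).factorial_pos
    have hT : (1 - ((k:ℝ) * ((k:ℝ) + 1)) / (((n : ℝ) + 1 + N) * ((n : ℝ) + 1 + N + 1)))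
        = (((n:ℝ)+1+N-k) * ((n:ℝ)+1+N+1+k)) / (((n : ℝ) + 1 + N) * ((n : ℝ) + 1 + N + 1)) := by
      field_simp
      ring
    rw [hT, div_mul_div_comm,
      div_eq_div_iff
        (mul_pos (mul_pos f1 (mul_pos f2 (mul_pos f3 f4))) (mul_pos e1 e2)).ne'
        (mul_pos f1 (mul_pos f2 (mul_pos g3 g4))).ne']
    push_cast [hNk]
    ring

private lemma ratio_tendsto (c₁ c₂ : ℝ) :
    Tendsto (fun n : ℕ => (c₁ + n) / (c₂ + n)) atTop (𝓝 1) := by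
  have h2 : Tendsto (fun n : ℕ => (c₂ + (n:ℝ))) atTop atTop :=
    tendsto_atTop_add_const_left _ _ tendsto_natCast_atTop_atTop
  have h3 : Tendsto (fun n : ℕ => (c₁ - c₂) / (c₂ + n)) atTop (𝓝 0) :=
    Tendsto.div_atTop tendsto_const_nhds h2
  have h4 : Tendsto (fun n : ℕ => 1 + (c₁ - c₂) / (c₂ + n)) atTop (𝓝 1) := by
    simpa using h3.const_add 1
  refine h4.congr' ?_
  filter_upwards [h2.eventually_gt_atTop 0] with n hn
  field_simp
  ring

private lemma tendsto_partial (N k : ℕ) (hk : k ≤ N) :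
    Tendsto (fun n => ∏ p ∈ range n,
        (1 - ((k:ℝ) * ((k:ℝ) + 1)) / (((p : ℝ) + 1 + N) * ((p : ℝ) + 1 + N + 1))))
      atTop (𝓝 ((N.factorial : ℝ) * (N+1).factorial /
        ((N-k).factorial * (N+k+1).factorial))) := by
  have heq : ∀ n : ℕ,
      ∏ p ∈ range n, (1 - ((k:ℝ) * ((k:ℝ) + 1)) / (((p : ℝ) + 1 + N) * ((p : ℝ) + 1 + N + 1)))
        = ((N.factorial : ℝ) * (N+1).factorial / ((N-k).factorial * (N+k+1).factorial)) *
          (((∏ j ∈ range k, (N+1+n+1+j) : ℕ) : ℝ) / ((∏ j ∈ range k, (N-k+n+1+j) : ℕ) : ℝ)) := by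
    intro n
    have h1 : (N+k+1+n).factorial = (N+1+n).factorial * ∏ j ∈ range k, (N+1+n+1+j) := by
      have h := asc_fact (N+1+n) k
      rw [show N+1+n+k = N+k+1+n from by omega] at h
      exact h
    have h2 : (N+n).factorial = (N-k+n).factorial * ∏ j ∈ range k, (N-k+n+1+j) := by
      have h := asc_fact (N-k+n) k
      rw [show N-k+n+k = N+n from by omega] at h
      exact h
    rw [partial_prod N k hk n, h1, h2]
    have hE : ((N-k).factorial : ℝ) ≠ 0 := by exact_mod_cast (N-k).factorial_ne_zero
    have hF : ((N+k+1).factorial : ℝ) ≠ 0 := by exact_mod_cast (N+k+1).factorial_ne_zero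
    have hC : ((N-k+n).factorial : ℝ) ≠ 0 := by exact_mod_cast (N-k+n).factorial_ne_zero
    have hD : ((N+1+n).factorial : ℝ) ≠ 0 := by exact_mod_cast (N+1+n).factorial_ne_zero
    have hQ : ((∏ j ∈ range k, (N-k+n+1+j) : ℕ) : ℝ) ≠ 0 := by
      exact_mod_cast (Finset.prod_pos (fun j _ => by omega)).ne'
    push_cast [Nat.cast_sub hk] at hQ ⊢
    field_simp
  have hQt : Tendsto (fun n : ℕ => ((∏ j ∈ range k, (N+1+n+1+j) : ℕ) : ℝ) /
      ((∏ j ∈ range k, (N-k+n+1+j) : ℕ) : ℝ)) atTop (𝓝 1) := by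
    have h := tendsto_finset_prod (range k)
      (f := fun (j : ℕ) (n : ℕ) => (((N+1+n+1+j : ℕ) : ℝ)) / ((N-k+n+1+j : ℕ) : ℝ))
      (x := atTop) (a := fun _ => (1:ℝ)) ?_
    · have hfun : ∀ n : ℕ, (∏ c ∈ range k, ((N+1+n+1+c : ℕ) : ℝ) / ((N-k+n+1+c : ℕ) : ℝ))
          = ((∏ j ∈ range k, (N+1+n+1+j) : ℕ) : ℝ) / ((∏ j ∈ range k, (N-k+n+1+j) : ℕ) : ℝ) := by
        intro n
        rw [Nat.cast_prod, Nat.cast_prod, prod_div_distrib]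
      simpa using h.congr hfun
    · intro j _
      have h := ratio_tendsto ((N:ℝ)+2+j) ((N:ℝ)-k+1+j)
      refine h.congr (fun n => ?_)
      push_cast [Nat.cast_sub hk]
      ring
  have h := hQt.const_mul
    ((N.factorial : ℝ) * (N+1).factorial / ((N-k).factorial * (N+k+1).factorial))
  simpa using h.congr (fun n => (heq n).symm)

/-- With `W(λ) = ∏_{p≥1}(1 − λ/((p+2ν)(p+2ν+1)))` and `N = 2ν` a
nonnegative integer, the product converges (absolutely) for every `λ ≥ 0`, and
`W(k(k+1)) = Γ(2ν+1)Γ(2ν+2)/(Γ(2ν−k+1)Γ(2ν+k+2))` for every integer `0 ≤ k ≤ 2ν`. -/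
theorem berezin_multiplier_sphere (N : ℕ) :
    (∀ lam : ℝ, 0 ≤ lam → Multipliable (fun p : ℕ =>
      1 - lam / (((p : ℝ) + 1 + N) * ((p : ℝ) + 1 + N + 1)))) ∧
    (∀ k : ℕ, k ≤ N →
      (∏' p : ℕ, (1 - ((k : ℝ) * (k + 1)) / (((p : ℝ) + 1 + N) * ((p : ℝ) + 1 + N + 1)))) =
        Real.Gamma ((N : ℝ) + 1) * Real.Gamma ((N : ℝ) + 2) /
          (Real.Gamma ((N : ℝ) - k + 1) * Real.Gamma ((N : ℝ) + k + 2))) := by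
  constructor
  · exact fun lam hlam => mult_aux N lam hlam
  · intro k hk
    have hm : Multipliable (fun p : ℕ =>
        1 - ((k : ℝ) * ((k:ℝ) + 1)) / (((p : ℝ) + 1 + N) * ((p : ℝ) + 1 + N + 1))) :=
      mult_aux N ((k:ℝ) * ((k:ℝ) + 1)) (by positivity)
    have h1 := hm.hasProd.tendsto_prod_nat
    have h2 := tendsto_partial N k hk
    have hval := tendsto_nhds_unique h1 h2
    have g1 : Real.Gamma ((N:ℝ)+1) = N.factorial := Real.Gamma_nat_eq_factorial N
    have g2 : Real.Gamma ((N:ℝ)+2) = (N+1).factorial := by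
      rw [show ((N:ℝ)+2) = ((N+1:ℕ):ℝ)+1 by push_cast; ring]
      exact_mod_cast Real.Gamma_nat_eq_factorial (N+1)
    have g3 : Real.Gamma ((N:ℝ)-k+1) = (N-k).factorial := by
      rw [show ((N:ℝ)-k+1) = ((N-k:ℕ):ℝ)+1 by push_cast [Nat.cast_sub hk]; ring]
      exact_mod_cast Real.Gamma_nat_eq_factorial (N-k)
    have g4 : Real.Gamma ((N:ℝ)+k+2) = (N+k+1).factorial := by
      rw [show ((N:ℝ)+k+2) = ((N+k+1:ℕ):ℝ)+1 by push_cast; ring]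
      exact_mod_cast Real.Gamma_nat_eq_factorial (N+k+1)
    rw [g1, g2, g3, g4]
    exact_mod_cast hval
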